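/- Let X be a set, B a collection of subsets of X of breadth d, N > 0, and S a set system on X such that every set in S is a Boolean combination of at most N sets from B. Then for every t, the number of nonempty atoms generated by any t sets from S is at most the sum over i = 0,...,d of C(Nt, i). -/

import Mathlib

/-- Boolean combinations of sets from a family `𝓖`. -/
inductive BoolComb {X : Type*} (𝓖 : Set (Set X)) : Set X → Prop
  | base : ∀ s ∈ 𝓖, BoolComb 𝓖 s
  | compl : ∀ s : Set X, BoolComb 𝓖 s → BoolComb 𝓖 sᶜ
  | union : ∀ s t : Set X, BoolComb 𝓖 s → BoolComb 𝓖 t → BoolComb 𝓖 (s ∪ t)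
  | inter : ∀ s t : Set X, BoolComb 𝓖 s → BoolComb 𝓖 t → BoolComb 𝓖 (s ∩ t)

/-- Membership in a Boolean combination depends only on the membership pattern in `𝓖`. -/
theorem boolcomb_mem_iff {X : Type*} {𝓖 : Set (Set X)} {s : Set X} (h : BoolComb 𝓖 s)
    {x y : X} (hxy : ∀ u ∈ 𝓖, (x ∈ u ↔ y ∈ u)) : x ∈ s ↔ y ∈ s := by
  induction h with
  | base u hu => exact hxy u hu
  | compl u _ ih => simp [Set.mem_compl_iff, ih]
  | union u v _ _ ih1 ih2 => simp [Set.mem_union, ih1, ih2]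
  | inter u v _ _ ih1 ih2 => simp [Set.mem_inter_iff, ih1, ih2]

/-- If `𝓑` has breadth `d` and every set of `𝓢` is a Boolean combination of at most
`N` sets of `𝓑`, then any `t` sets of `𝓢` generate at most `∑_{i≤d} C(Nt,i)` nonempty
atoms. -/
theorem stmt10 {X : Type*} (𝓑 𝓢 : Set (Set X)) (d N : ℕ) (hd : 0 < d) (hN : 0 < N)
    (hbreadth : ∀ (m : ℕ) (A : Fin m → Set X), d < m → (∀ i, A i ∈ 𝓑) →
      (⋂ i, A i).Nonempty →
      ∃ s : Finset (Fin m), s.card = d ∧ (⋂ i ∈ s, A i) = ⋂ i, A i)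
    (hS : ∀ s ∈ 𝓢, ∃ g : Fin N → Set X, (∀ i, g i ∈ 𝓑) ∧ BoolComb (Set.range g) s)
    (t : ℕ) (A : Fin t → Set X) (hA : ∀ i, A i ∈ 𝓢) :
    Set.ncard {T : Set X | T.Nonempty ∧ ∃ I : Finset (Fin t),
        T = ⋂ i, if i ∈ I then A i else (A i)ᶜ} ≤
      ∑ i ∈ Finset.range (d + 1), (N * t).choose i := by
  classical
  choose g hg1 hg2 using fun i : Fin t => hS (A i) (hA i)
  set n := N * t with hn
  let e0 : Fin N × Fin t ≃ Fin n := finProdFinEquiv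
  set B : Fin n → Set X := fun k => g (e0.symm k).2 (e0.symm k).1 with hB
  have hBmem : ∀ k, B k ∈ 𝓑 := fun k => hg1 _ _
  set Ix : X → Finset (Fin n) := fun x => Finset.univ.filter (fun k => x ∈ B k) with hIx
  have hIx_mem : ∀ (x : X) (k : Fin n), k ∈ Ix x ↔ x ∈ B k := by
    intro x k; simp [hIx]
  -- choose a small subfamily with the same intersection
  have hexJ : ∀ x : X, ∃ J : Finset (Fin n), J.card ≤ d ∧
      (⋂ k ∈ J, B k) = ⋂ k ∈ Ix x, B k := by
    intro x
    by_cases hc : (Ix x).card ≤ d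
    · exact ⟨Ix x, hc, rfl⟩
    · push_neg at hc
      set m := (Ix x).card with hm
      set e := (Ix x).equivFin with he
      have hre : (⋂ a : Fin m, B (e.symm a).1) = ⋂ k ∈ Ix x, B k := by
        ext z
        simp only [Set.mem_iInter]
        constructor
        · intro h k hk
          have := h (e ⟨k, hk⟩)
          simpa using this
        · intro h a
          exact h _ (e.symm a).2
      have hne : (⋂ a : Fin m, B (e.symm a).1).Nonempty := by
        refine ⟨x, ?_⟩
        rw [hre]
        simp only [Set.mem_iInter]
        intro k hk
        exact (hIx_mem x k).1 hk
      obtain ⟨s, hscard, hs⟩ := hbreadth m (fun a => B (e.symm a).1) hc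
        (fun a => hBmem _) hne
      refine ⟨s.image (fun a => (e.symm a).1), ?_, ?_⟩
      · exact le_trans Finset.card_image_le (le_of_eq hscard)
      · rw [← hre, ← hs]
        ext z
        simp only [Set.mem_iInter, Finset.mem_image]
        constructor
        · rintro h a ha
          exact h _ ⟨a, ha, rfl⟩
        · rintro h k ⟨a, ha, rfl⟩
          exact h a ha
  choose J hJcard hJ using hexJ
  -- the membership pattern is recoverable from `J x`
  have hrecover : ∀ (x : X) (k : Fin n), k ∈ Ix x ↔ (⋂ j ∈ J x, B j) ⊆ B k := by
    intro x k
    constructor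
    · intro hk
      rw [hJ x]
      exact Set.biInter_subset_of_mem hk
    · intro hsub
      have hx : x ∈ ⋂ j ∈ J x, B j := by
        rw [hJ x]
        simp only [Set.mem_iInter]
        intro j hj
        exact (hIx_mem x j).1 hj
      exact (hIx_mem x k).2 (hsub hx)
  have hagree : ∀ x y : X, J x = J y → ∀ i, x ∈ A i ↔ y ∈ A i := by
    intro x y hxy i
    have hI : Ix x = Ix y := by
      ext k
      rw [hrecover, hrecover, hxy]
    refine boolcomb_mem_iff (hg2 i) ?_
    rintro u ⟨j, rfl⟩
    have hgu : g i j = B (e0 (j, i)) := by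
      simp [hB, Equiv.symm_apply_apply]
    rw [hgu, ← hIx_mem, ← hIx_mem, hI]
  -- the injection from atoms to small index sets
  set f : Set X → Finset (Fin n) := fun T => if h : T.Nonempty then J h.some else ∅ with hf
  have hmain : Set.ncard {T : Set X | T.Nonempty ∧ ∃ I : Finset (Fin t),
      T = ⋂ i, if i ∈ I then A i else (A i)ᶜ} ≤
      Set.ncard {J : Finset (Fin n) | J.card ≤ d} := by
    refine Set.ncard_le_ncard_of_injOn f ?_ ?_ (Set.toFinite _)
    · rintro T ⟨hne, -⟩
      simp only [hf, dif_pos hne]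
      exact hJcard _
    · rintro T1 ⟨hne1, I1, hT1⟩ T2 ⟨hne2, I2, hT2⟩ hf12
      simp only [hf, dif_pos hne1, dif_pos hne2] at hf12
      have hag := hagree _ _ hf12
      have hx : ∀ i, i ∈ I1 ↔ hne1.some ∈ A i := by
        intro i
        have hx1 : hne1.some ∈ ⋂ i, if i ∈ I1 then A i else (A i)ᶜ := by
          rw [← hT1]; exact hne1.some_mem
        simp only [Set.mem_iInter] at hx1
        constructor
        · intro hi
          simpa [hi] using hx1 i
        · intro hxAi
          by_contra hi
          exact (by simpa [hi] using hx1 i : hne1.some ∈ (A i)ᶜ) hxAi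
      have hy : ∀ i, i ∈ I2 ↔ hne2.some ∈ A i := by
        intro i
        have hx2 : hne2.some ∈ ⋂ i, if i ∈ I2 then A i else (A i)ᶜ := by
          rw [← hT2]; exact hne2.some_mem
        simp only [Set.mem_iInter] at hx2
        constructor
        · intro hi
          simpa [hi] using hx2 i
        · intro hxAi
          by_contra hi
          exact (by simpa [hi] using hx2 i : hne2.some ∈ (A i)ᶜ) hxAi
      have hI12 : I1 = I2 := by
        ext i
        rw [hx i, hag i, ← hy i]
      rw [hT1, hT2, hI12]
  refine le_trans hmain ?_
  -- count the small index sets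
  have hset : {J : Finset (Fin n) | J.card ≤ d} =
      ↑(Finset.univ.filter (fun J : Finset (Fin n) => J.card ≤ d)) := by
    ext J; simp
  rw [hset, Set.ncard_coe_finset]
  rw [Finset.card_eq_sum_card_fiberwise
    (f := Finset.card) (t := Finset.range (d + 1))
    (fun J hJ => by simp only [Finset.mem_coe, Finset.mem_filter] at hJ; exact Finset.mem_range.2 (Nat.lt_succ_of_le hJ.2))]
  refine le_of_eq (Finset.sum_congr rfl fun i hi => ?_)
  have hi' : i ≤ d := Nat.lt_succ_iff.1 (Finset.mem_range.1 hi)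
  have hfib : (Finset.univ.filter (fun J : Finset (Fin n) => J.card ≤ d)).filter
      (fun J => J.card = i) = Finset.univ.powersetCard i := by
    ext J
    simp only [Finset.mem_filter, Finset.mem_univ, true_and, Finset.mem_powersetCard,
      Finset.subset_univ]
    omega
  rw [hfib, Finset.card_powersetCard, Finset.card_univ, Fintype.card_fin]
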